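/- Let ã, r̃ be real numbers with 0 < ã < 1 and r̃ > 1. For p ∈ (0,1), set r*(p) = max( ã/p, r̃ ). Define ε(p) = log( (1−p) / (1/r*(p) − p) ) for p ∈ (0,1) with p < 1/r*(p). Then ε(p) ≥ log( (r̃ − ã)/(1 − ã) ) for every p ∈ (0,1) with p < 1/r*(p), and ε(ã/r̃) = log( (r̃ − ã)/(1 − ã) ). -/
import Mathlib


/-- The privacy-budget threshold `ε_i(p, 1)` (the `q̃ = 1` branch) under the risk profile
`r*(p,1) = max{ã/p, r̃}`. -/
noncomputable def epsThreshold19 (a r p : ℝ) : ℝ :=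
  Real.log ((1 - p) / (1 / max (a / p) r - p))

theorem stmt_19 (a r : ℝ) (ha0 : 0 < a) (ha1 : a < 1) (hr : 1 < r) :
    (∀ p : ℝ, 0 < p → p < 1 → p < 1 / max (a / p) r →
      Real.log ((r - a) / (1 - a)) ≤ epsThreshold19 a r p) ∧
    epsThreshold19 a r (a / r) = Real.log ((r - a) / (1 - a)) := by
  have hr0 : (0:ℝ) < r := by linarith
  have ha1' : (0:ℝ) < 1 - a := by linarith
  have hra : (0:ℝ) < r - a := by linarith
  have hpos : (0:ℝ) < (r - a) / (1 - a) := div_pos hra ha1'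
  constructor
  · intro p hp0 hp1 hpm
    unfold epsThreshold19
    have hden : 0 < 1 / max (a / p) r - p := by linarith
    apply Real.log_le_log hpos
    rcases le_or_gt (a / p) r with hcase | hcase
    · rw [max_eq_right hcase] at hden ⊢
      have hap : a ≤ r * p := by
        rw [div_le_iff₀ hp0] at hcase; linarith
      rw [div_le_div_iff₀ ha1' hden]
      have h1 : (1:ℝ)/r * r = 1 := one_div_mul_cancel (ne_of_gt hr0)
      nlinarith [mul_pos hp0 hr0]
    · rw [max_eq_left hcase.le] at hden ⊢
      have hpa : r * p < a := by
        rw [lt_div_iff₀ hp0] at hcase; linarith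
      have h1 : (1:ℝ) / (a / p) = p / a := one_div_div a p
      rw [h1] at hden ⊢
      rw [div_le_div_iff₀ ha1' hden]
      have h2 : p / a * a = p := div_mul_cancel₀ p (ne_of_gt ha0)
      nlinarith
  · unfold epsThreshold19
    have h1 : a / (a / r) = r := by field_simp
    rw [h1, max_self]
    congr 1
    have hd : (0:ℝ) < 1/r - a/r := by
      have := div_pos ha1' hr0
      rw [sub_div] at this; linarith
    rw [div_eq_div_iff (ne_of_gt hd) (ne_of_gt ha1')]
    field_simp
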